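/- Fix a ∈ ℝ with a ≠ 0 and k ∈ ℕ, and define f : ℝ → ℂ by f(x) = h_k(x + ia), using the entire extension of the Hermite function h_k. Then f is twice differentiable and for every x ∈ ℝ, -f''(x) + (x² + 2iax)·f(x) = (1 + 2k + a²)·f(x). -/

import Mathlib

open MeasureTheory

/-- The physicists' Hermite polynomial `H_k`, extended to an entire function on `ℂ`:
`H_k(z) = (-1)^k e^{z²} (d/dz)^k e^{-z²}`. -/
noncomputable def physHermiteC (k : ℕ) (z : ℂ) : ℂ :=
  (-1) ^ k * Complex.exp (z ^ 2) * iteratedDeriv k (fun w : ℂ => Complex.exp (-w ^ 2)) z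

/-- The Hermite function `h_k(z) = (2^k k! √π)^{-1/2} H_k(z) e^{-z²/2}`, as an entire
function on `ℂ`. -/
noncomputable def hermiteFunC (k : ℕ) (z : ℂ) : ℂ :=
  ((Real.sqrt (2 ^ k * Nat.factorial k * Real.sqrt Real.pi) : ℝ) : ℂ)⁻¹ *
    physHermiteC k z * Complex.exp (-z ^ 2 / 2)

/-- Physicists' Hermite "polynomials" defined as entire functions by recursion. -/
noncomputable def HC : ℕ → ℂ → ℂ
  | 0 => fun _ => 1
  | n+1 => fun z => 2 * z * HC n z - deriv (HC n) z

lemma HC_pair (n : ℕ) :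
    (∀ z : ℂ, HasDerivAt (HC n) (2 * n * HC (n-1) z) z) ∧
    (∀ z : ℂ, HasDerivAt (HC (n+1)) (2 * (n+1) * HC n z) z) := by
  induction n with
  | zero =>
    constructor
    · intro z
      simpa [HC] using (hasDerivAt_const z (1:ℂ))
    · intro z
      have h1 : HC 1 = fun z : ℂ => 2 * z := by
        funext w
        show 2 * w * HC 0 w - deriv (HC 0) w = 2 * w
        simp [HC]
      rw [h1]
      have h2 : (2:ℂ) * (((0:ℕ):ℂ)+1) * HC 0 z = 2 := by norm_num [HC]
      rw [h2]
      simpa using ((hasDerivAt_id z).const_mul (2:ℂ))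
  | succ n ih =>
    have hsucc : ∀ w : ℂ, HC (n+1) w = 2 * w * HC n w - 2 * n * HC (n-1) w := by
      intro w
      show 2 * w * HC n w - deriv (HC n) w = _
      rw [(ih.1 w).deriv]
    refine ⟨by simpa using ih.2, ?_⟩
    intro z
    have heq : HC (n+2) = fun w : ℂ => 2 * w * HC (n+1) w - 2 * (n+1) * HC n w := by
      funext w
      show 2 * w * HC (n+1) w - deriv (HC (n+1)) w = _
      rw [(ih.2 w).deriv]
    rw [show HC (n+1+1) = HC (n+2) from rfl, heq]
    have h1 : HasDerivAt (fun w : ℂ => 2 * w * HC (n+1) w)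
        (2 * HC (n+1) z + 2 * z * (2 * (n+1) * HC n z)) z := by
      exact (((hasDerivAt_id z).const_mul (2:ℂ)).mul (ih.2 z)).congr_deriv (by simp)
    have h2 : HasDerivAt (fun w : ℂ => 2 * ((n:ℂ)+1) * HC n w)
        (2 * ((n:ℂ)+1) * (2 * n * HC (n-1) z)) z := (ih.1 z).const_mul _
    have h3 := h1.sub h2
    have h4 : (2 * HC (n+1) z + 2 * z * (2 * (n+1) * HC n z)) - 2 * ((n:ℂ)+1) * (2 * n * HC (n-1) z)
        = 2 * ((n:ℂ)+1+1) * HC (n+1) z := by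
      rw [hsucc z]; push_cast; ring
    rw [h4] at h3
    refine h3.congr_deriv ?_
    push_cast; ring

lemma HC_hasDerivAt (n : ℕ) (z : ℂ) : HasDerivAt (HC n) (2 * n * HC (n-1) z) z :=
  (HC_pair n).1 z

lemma HC_succ_eval (n : ℕ) (z : ℂ) : HC (n+1) z = 2 * z * HC n z - 2 * n * HC (n-1) z := by
  show 2 * z * HC n z - deriv (HC n) z = _
  rw [(HC_hasDerivAt n z).deriv]

lemma exp_neg_sq_hasDerivAt (z : ℂ) :
    HasDerivAt (fun w : ℂ => Complex.exp (-w^2)) (-(2*z) * Complex.exp (-z^2)) z := by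
  have h : HasDerivAt (fun w : ℂ => -w^2) (-(2*z)) z := by
    exact (hasDerivAt_pow 2 z).neg.congr_deriv (by simp)
  simpa [mul_comm] using h.cexp

lemma exp_neg_half_sq_hasDerivAt (z : ℂ) :
    HasDerivAt (fun w : ℂ => Complex.exp (-w^2/2)) (-z * Complex.exp (-z^2/2)) z := by
  have h : HasDerivAt (fun w : ℂ => -w^2/2) (-z) z := by
    have := ((hasDerivAt_pow 2 z).neg).div_const (2:ℂ)
    refine this.congr_deriv ?_
    ring
  simpa [mul_comm] using h.cexp

lemma iteratedDeriv_exp_neg_sq (k : ℕ) :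
    iteratedDeriv k (fun w : ℂ => Complex.exp (-w^2)) =
      fun z => (-1)^k * HC k z * Complex.exp (-z^2) := by
  induction k with
  | zero => funext z; simp [HC]
  | succ k ih =>
    funext z
    rw [iteratedDeriv_succ, ih]
    have h : HasDerivAt (fun z : ℂ => (-1)^k * HC k z * Complex.exp (-z^2))
        ((-1)^(k+1) * HC (k+1) z * Complex.exp (-z^2)) z := by
      have h0 := (((HC_hasDerivAt k z).const_mul ((-1:ℂ)^k)).mul (exp_neg_sq_hasDerivAt z))
      refine h0.congr_deriv ?_
      rw [HC_succ_eval]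
      push_cast; ring
    rw [h.deriv]

lemma physHermiteC_eq (k : ℕ) (z : ℂ) : physHermiteC k z = HC k z := by
  unfold physHermiteC
  rw [iteratedDeriv_exp_neg_sq]
  have h1 : Complex.exp (z^2) * Complex.exp (-z^2) = 1 := by
    rw [← Complex.exp_add]; simp
  have h2 : ((-1:ℂ))^k * (-1:ℂ)^k = 1 := by
    rw [← pow_add]
    exact Even.neg_one_pow ⟨k, rfl⟩
  calc ((-1:ℂ))^k * Complex.exp (z^2) * ((-1)^k * HC k z * Complex.exp (-z^2))
      = (((-1:ℂ))^k * (-1)^k) * (Complex.exp (z^2) * Complex.exp (-z^2)) * HC k z := by ring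
    _ = HC k z := by rw [h1, h2]; ring

/-- The Hermite function without normalization constant. -/
noncomputable def hF (k : ℕ) (z : ℂ) : ℂ := HC k z * Complex.exp (-z^2/2)

/-- Its derivative. -/
noncomputable def hF1 (k : ℕ) (z : ℂ) : ℂ :=
  (2 * k * HC (k-1) z - z * HC k z) * Complex.exp (-z^2/2)

lemma hF_hasDerivAt (k : ℕ) (z : ℂ) : HasDerivAt (hF k) (hF1 k z) z := by
  have h0 := (HC_hasDerivAt k z).mul (exp_neg_half_sq_hasDerivAt z)
  have he : hF k = fun w => HC k w * Complex.exp (-w^2/2) := rfl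
  rw [he]
  refine h0.congr_deriv ?_
  unfold hF1
  ring

lemma hF1_hasDerivAt (k : ℕ) (z : ℂ) :
    HasDerivAt (hF1 k) ((z^2 - (2*k+1)) * hF k z) z := by
  match k with
  | 0 =>
    have he : hF1 0 = fun w : ℂ => -(w * Complex.exp (-w^2/2)) := by
      funext w
      unfold hF1
      norm_num [HC]
    rw [he]
    have h0 := ((hasDerivAt_id' (x := z)).mul (exp_neg_half_sq_hasDerivAt z)).neg
    refine h0.congr_deriv ?_
    unfold hF
    rw [show HC 0 z = 1 from rfl]
    push_cast; ring
  | (m+1) =>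
    have he : hF1 (m+1) = fun w : ℂ =>
        (2 * ((m:ℂ)+1) * HC m w - w * HC (m+1) w) * Complex.exp (-w^2/2) := by
      funext w
      unfold hF1
      push_cast [Nat.add_sub_cancel]
      ring
    rw [he]
    have hk1 : HasDerivAt (HC (m+1)) (2 * ((m:ℂ)+1) * HC m z) z := by
      have := HC_hasDerivAt (m+1) z
      push_cast [Nat.add_sub_cancel] at this
      exact this
    have hA : HasDerivAt (fun w : ℂ => 2 * ((m:ℂ)+1) * HC m w - w * HC (m+1) w)
        (2 * ((m:ℂ)+1) * (2 * m * HC (m-1) z)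
          - (1 * HC (m+1) z + z * (2 * ((m:ℂ)+1) * HC m z))) z :=
      ((HC_hasDerivAt m z).const_mul _).sub ((hasDerivAt_id' (x := z)).mul hk1)
    have h0 := hA.mul (exp_neg_half_sq_hasDerivAt z)
    refine h0.congr_deriv ?_
    unfold hF
    rw [HC_succ_eval m z]
    push_cast
    ring

/-- Normalization constant. -/
noncomputable def cK (k : ℕ) : ℂ :=
  ((Real.sqrt (2 ^ k * Nat.factorial k * Real.sqrt Real.pi) : ℝ) : ℂ)⁻¹

lemma hermiteFunC_eq (k : ℕ) (z : ℂ) : hermiteFunC k z = cK k * hF k z := by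
  unfold hermiteFunC cK hF
  rw [physHermiteC_eq]
  ring

lemma f_hasDerivAt (a : ℝ) (k : ℕ) (x : ℝ) :
    HasDerivAt (fun x : ℝ => hermiteFunC k ((x : ℂ) + a * Complex.I))
      (cK k * hF1 k ((x : ℂ) + a * Complex.I)) x := by
  have h2 : HasDerivAt (fun z : ℂ => hF k (z + a * Complex.I))
      (hF1 k ((x : ℂ) + a * Complex.I)) (x : ℂ) := by
    have := (hF_hasDerivAt k ((x : ℂ) + a * Complex.I)).comp (x : ℂ)
      ((hasDerivAt_id (x : ℂ)).add_const ((a : ℂ) * Complex.I))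
    simpa [Function.comp_def] using this
  have h1 := (h2.const_mul (cK k)).comp_ofReal
  have he : (fun y : ℝ => hermiteFunC k ((y : ℂ) + a * Complex.I))
      = fun y : ℝ => cK k * hF k ((y : ℂ) + a * Complex.I) := by
    funext y; exact hermiteFunC_eq k _
  rw [he]
  exact h1

lemma f1_hasDerivAt (a : ℝ) (k : ℕ) (x : ℝ) :
    HasDerivAt (fun x : ℝ => cK k * hF1 k ((x : ℂ) + a * Complex.I))
      (cK k * ((((x : ℂ) + a * Complex.I)^2 - (2*k+1)) * hF k ((x : ℂ) + a * Complex.I))) x := by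
  have h2 : HasDerivAt (fun z : ℂ => hF1 k (z + a * Complex.I))
      ((((x : ℂ) + a * Complex.I)^2 - (2*k+1)) * hF k ((x : ℂ) + a * Complex.I)) (x : ℂ) := by
    have := (hF1_hasDerivAt k ((x : ℂ) + a * Complex.I)).comp (x : ℂ)
      ((hasDerivAt_id (x : ℂ)).add_const ((a : ℂ) * Complex.I))
    simpa [Function.comp_def] using this
  exact (h2.const_mul (cK k)).comp_ofReal

/-- For `a ∈ ℝ \ {0}` and `k ∈ ℕ`, the function `f(x) = h_k(x + ia)` is twice
differentiable and satisfies `-f'' + (x² + 2iax) f = (1 + 2k + a²) f`. -/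
theorem stmt_2 (a : ℝ) (ha : a ≠ 0) (k : ℕ) :
    Differentiable ℝ (fun x : ℝ => hermiteFunC k ((x : ℂ) + a * Complex.I)) ∧
    Differentiable ℝ (deriv (fun x : ℝ => hermiteFunC k ((x : ℂ) + a * Complex.I))) ∧
    ∀ x : ℝ,
      -(deriv (deriv (fun y : ℝ => hermiteFunC k ((y : ℂ) + a * Complex.I))) x)
          + ((x : ℂ) ^ 2 + 2 * (a : ℂ) * Complex.I * (x : ℂ)) *
              hermiteFunC k ((x : ℂ) + a * Complex.I)
        = (1 + 2 * (k : ℂ) + (a : ℂ) ^ 2) * hermiteFunC k ((x : ℂ) + a * Complex.I) := by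
  have hd : deriv (fun x : ℝ => hermiteFunC k ((x : ℂ) + a * Complex.I))
      = fun x : ℝ => cK k * hF1 k ((x : ℂ) + a * Complex.I) :=
    funext fun x => (f_hasDerivAt a k x).deriv
  refine ⟨fun x => (f_hasDerivAt a k x).differentiableAt, ?_, ?_⟩
  · rw [hd]
    exact fun x => (f1_hasDerivAt a k x).differentiableAt
  · intro x
    rw [hd, (f1_hasDerivAt a k x).deriv, hermiteFunC_eq]
    have hI : (Complex.I)^2 = -1 := Complex.I_sq
    linear_combination (-(a:ℂ)^2 * cK k * hF k ((x:ℂ) + a * Complex.I)) * hI
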